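/- Let $c>0$, $\tau\ge 0$, $a_+<0$, $b_+>0$ with $a_++b_+<0$, and let $\mu_2<0<\mu_1$ be the real zeros of $\chi_+(z)=z^2-cz+a_++b_+e^{-zc\tau}$. Then every complex zero $w$ of $\chi_+$ satisfies $\mathrm{Re}\,w\notin[\mu_2,\mu_1]$ unless $w\in\{\mu_1,\mu_2\}$; in particular $\mu_1,\mu_2$ are the only zeros of $\chi_+$ in the strip $\{\mu_2\le\mathrm{Re}\,z\le\mu_1\}$. -/

import Mathlib

open Set

private lemma chi_strict_convex (c τ a b : ℝ) (hb : 0 < b) :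
    StrictConvexOn ℝ (Set.univ : Set ℝ)
      (fun x : ℝ => x ^ 2 - c * x + a + b * Real.exp (-(x * (c * τ)))) := by
  have h1 : StrictConvexOn ℝ (Set.univ : Set ℝ) (fun x : ℝ => x ^ 2) :=
    Even.strictConvexOn_pow (by decide) (by norm_num)
  have h2 : ConvexOn ℝ (Set.univ : Set ℝ)
      (fun x : ℝ => -(c * x) + a + b * Real.exp (-(x * (c * τ)))) := by
    refine ⟨convex_univ, ?_⟩
    intro x _ y _ s t hs ht hst
    simp only [smul_eq_mul]
    have hexp := convexOn_exp.2 (mem_univ (-(x * (c * τ)))) (mem_univ (-(y * (c * τ)))) hs ht hst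
    simp only [smul_eq_mul] at hexp
    have hrw : -((s * x + t * y) * (c * τ)) = s * -(x * (c * τ)) + t * -(y * (c * τ)) := by ring
    rw [hrw]
    have hmul := mul_le_mul_of_nonneg_left hexp hb.le
    have ha2 : s * a + t * a = a := by linear_combination a * hst
    linarith [hmul, ha2]
  have heq : (fun x : ℝ => x ^ 2 - c * x + a + b * Real.exp (-(x * (c * τ))))
      = (fun x : ℝ => x ^ 2) + (fun x : ℝ => -(c * x) + a + b * Real.exp (-(x * (c * τ)))) := by
    funext x; simp [Pi.add_apply]; ring
  rw [heq]
  exact h1.add_convexOn h2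

/-- The real zeros `μ₂ < 0 < μ₁` of `χ₊` are its only zeros in the complex strip
`{μ₂ ≤ Re z ≤ μ₁}`. -/
theorem chi_plus_only_zeros_in_strip (c τ a b μ₁ μ₂ : ℝ) (hc : 0 < c) (hτ : 0 ≤ τ)
    (ha : a < 0) (hb : 0 < b) (hab : a + b < 0)
    (hμ₂neg : μ₂ < 0) (hμ₁pos : 0 < μ₁)
    (hzero₂ : μ₂ ^ 2 - c * μ₂ + a + b * Real.exp (-(μ₂ * (c * τ))) = 0)
    (hzero₁ : μ₁ ^ 2 - c * μ₁ + a + b * Real.exp (-(μ₁ * (c * τ))) = 0) :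
    ∀ w : ℂ, w ^ 2 - (c : ℂ) * w + (a : ℂ) +
        (b : ℂ) * Complex.exp (-(w * ((c : ℂ) * (τ : ℂ)))) = 0 →
      μ₂ ≤ w.re → w.re ≤ μ₁ → w = (μ₂ : ℂ) ∨ w = (μ₁ : ℂ) := by
  intro w hw hl hr
  have hconv := chi_strict_convex c τ a b hb
  have hμlt : μ₂ < μ₁ := by linarith
  -- f < 0 strictly inside (μ₂, μ₁)
  have hneg : ∀ z : ℝ, μ₂ < z → z < μ₁ →
      z ^ 2 - c * z + a + b * Real.exp (-(z * (c * τ))) < 0 := by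
    intro z h2 h1
    have hd : 0 < μ₁ - μ₂ := by linarith
    set s : ℝ := (μ₁ - z) / (μ₁ - μ₂) with hsdef
    set t : ℝ := (z - μ₂) / (μ₁ - μ₂) with htdef
    have hs : 0 < s := div_pos (by linarith) hd
    have ht : 0 < t := div_pos (by linarith) hd
    have hst : s + t = 1 := by rw [hsdef, htdef, ← add_div]
                               rw [show μ₁ - z + (z - μ₂) = μ₁ - μ₂ by ring, div_self hd.ne']
    have hx : s • μ₂ + t • μ₁ = z := by
      simp only [smul_eq_mul, hsdef, htdef]; field_simp; ring
    have hkey := hconv.2 (mem_univ μ₂) (mem_univ μ₁) (ne_of_lt hμlt) hs ht hst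
    rw [hx] at hkey
    simp only [smul_eq_mul] at hkey
    calc z ^ 2 - c * z + a + b * Real.exp (-(z * (c * τ)))
        < s * (μ₂ ^ 2 - c * μ₂ + a + b * Real.exp (-(μ₂ * (c * τ))))
          + t * (μ₁ ^ 2 - c * μ₁ + a + b * Real.exp (-(μ₁ * (c * τ)))) := hkey
      _ = 0 := by rw [hzero₂, hzero₁]; ring
  set x : ℝ := w.re with hxd
  set y : ℝ := w.im with hyd
  have heq : w ^ 2 - (c : ℂ) * w + (a : ℂ)
      = -((b : ℂ) * Complex.exp (-(w * ((c : ℂ) * (τ : ℂ))))) := by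
    linear_combination hw
  have habs : ‖w ^ 2 - (c : ℂ) * w + (a : ℂ)‖ = b * Real.exp (-(x * (c * τ))) := by
    rw [heq, norm_neg, norm_mul, Complex.norm_exp]
    have hre2 : (-(w * ((c : ℂ) * (τ : ℂ)))).re = -(x * (c * τ)) := by
      simp [Complex.mul_re, hxd]
    rw [hre2, Complex.norm_real, Real.norm_eq_abs, abs_of_pos hb]
    
  have hre : (w ^ 2 - (c : ℂ) * w + (a : ℂ)).re = x ^ 2 - y ^ 2 - c * x + a := by
    simp [Complex.sub_re, Complex.add_re, Complex.mul_re, pow_two, hxd, hyd]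
  have h1 : -((w ^ 2 - (c : ℂ) * w + (a : ℂ)).re)
      ≤ ‖w ^ 2 - (c : ℂ) * w + (a : ℂ)‖ :=
    (neg_le_abs _).trans (Complex.abs_re_le_norm _)
  rw [habs, hre] at h1
  have hge : y ^ 2 ≤ x ^ 2 - c * x + a + b * Real.exp (-(x * (c * τ))) := by linarith
  have hysq : 0 ≤ y ^ 2 := sq_nonneg y
  rcases eq_or_lt_of_le hl with h2 | h2
  · left
    have hy : y = 0 := by
      have : x ^ 2 - c * x + a + b * Real.exp (-(x * (c * τ))) = 0 := by rw [← h2]; exact hzero₂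
      nlinarith
    apply Complex.ext <;> simp [← hxd, ← hyd, ← h2, hy]
  · rcases eq_or_lt_of_le hr with h1' | h1'
    · right
      have hy : y = 0 := by
        have : x ^ 2 - c * x + a + b * Real.exp (-(x * (c * τ))) = 0 := by rw [h1']; exact hzero₁
        nlinarith
      apply Complex.ext <;> simp [← hxd, ← hyd, h1', hy]
    · exact absurd (hneg x h2 h1') (by linarith)
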